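/- Let G = SAG^{n,m}(π, π', S) be a slice alignment graph, let π'' be a cut-path with π ⪯ π'' ⪯ π', and set G_L = SAG^{n,m}(π, π'', S ∩ slice[π..π'')) and G_R = SAG^{n,m}(π'', π', S ∩ slice[π''..π')). Then the distance matrices satisfy D_G = D_{G_L} ⊙ D_{G_R}, where (A ⊙ B)[a,b] = min_c (A[a,c] + B[c,b]). -/

import Mathlib

/-- Membership in the grid of points `[0..n] × [0..m]`. -/
def inGrid (n m : ℕ) (p : ℤ × ℤ) : Prop :=
  0 ≤ p.1 ∧ p.1 ≤ (n : ℤ) ∧ 0 ≤ p.2 ∧ p.2 ≤ (m : ℤ)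

/-- `p ⪯ q`: equal, or strictly smaller in both coordinates. -/
def prec_eq (p q : ℤ × ℤ) : Prop :=
  p = q ∨ (p.1 < q.1 ∧ p.2 < q.2)

/-- A cut-path in `[0..n]×[0..m]`: an antichain with `π d` on diagonal `x−y = d−m`. -/
def IsCutPath (n m : ℕ) (π : ℕ → ℤ × ℤ) : Prop :=
  (∀ d ≤ n + m, inGrid n m (π d)) ∧
  (∀ d ≤ n + m, (π d).1 - (π d).2 = (d : ℤ) - (m : ℤ)) ∧
  (∀ d ≤ n + m, ∀ d' ≤ n + m, ¬((π d).1 < (π d').1 ∧ (π d).2 < (π d').2))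

/-- Membership in the (closed) slice between cut-paths `π ⪯ π'`. -/
def inSlice (m : ℕ) (π π' : ℕ → ℤ × ℤ) (p : ℤ × ℤ) : Prop :=
  prec_eq (π (p.1 - p.2 + m).toNat) p ∧ prec_eq p (π' (p.1 - p.2 + m).toNat)

/-- Weighted edges of the alignment graph `AG^{n,m}(S)`. -/
def agEdge (S : Set (ℤ × ℤ)) (p q : ℤ × ℤ) (w : ℕ) : Prop :=
  (((q.1 = p.1 + 1 ∧ q.2 = p.2) ∨ (p.1 = q.1 + 1 ∧ p.2 = q.2) ∨
    (q.1 = p.1 ∧ q.2 = p.2 + 1) ∨ (p.1 = q.1 ∧ p.2 = q.2 + 1)) ∧ w = 1) ∨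
  (((q.1 = p.1 + 1 ∧ q.2 = p.2 + 1 ∧ p ∈ S) ∨
    (p.1 = q.1 + 1 ∧ p.2 = q.2 + 1 ∧ q ∈ S)) ∧ w = 0)

/-- `sagWalkCost`: existence of a walk of total weight `c` in the slice alignment
graph `SAG^{n,m}(π, π', S)` (the subgraph induced by the slice between `π` and `π'`). -/
def sagWalkCost (n m : ℕ) (π π' : ℕ → ℤ × ℤ) (S : Set (ℤ × ℤ))
    (p p' : ℤ × ℤ) (c : ℕ) : Prop :=
  ∃ (L : ℕ) (f : ℕ → ℤ × ℤ) (w : ℕ → ℕ),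
    f 0 = p ∧ f L = p' ∧
    (∀ i ≤ L, inGrid n m (f i) ∧ inSlice m π π' (f i)) ∧
    (∀ i < L, agEdge S (f i) (f (i + 1)) (w i)) ∧
    c = ∑ i ∈ Finset.range L, w i


/-- Membership in the half-open slice `slice[π..π') = {p : π_d ⪯ p ≺ π'_d}`. -/
def inHalfSlice (m : ℕ) (π π' : ℕ → ℤ × ℤ) (p : ℤ × ℤ) : Prop :=
  prec_eq (π (p.1 - p.2 + m).toNat) p ∧
  (p.1 < (π' (p.1 - p.2 + m).toNat).1 ∧ p.2 < (π' (p.1 - p.2 + m).toNat).2)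

/-- Inductive characterization of walks. -/
inductive AWalk (E : ℤ × ℤ → ℤ × ℤ → ℕ → Prop) (V : ℤ × ℤ → Prop) :
    ℤ × ℤ → ℤ × ℤ → ℕ → Prop
  | nil (p : ℤ × ℤ) (hp : V p) : AWalk E V p p 0
  | cons {p q r : ℤ × ℤ} {w c : ℕ} (hp : V p) (he : E p q w)
      (hw : AWalk E V q r c) : AWalk E V p r (w + c)

/-- Vertex predicate of a slice alignment graph. -/
def sliceV (n m : ℕ) (π π' : ℕ → ℤ × ℤ) (p : ℤ × ℤ) : Prop :=
  inGrid n m p ∧ inSlice m π π' p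

theorem AWalk.src {E V p q c} (h : AWalk E V p q c) : V p := by
  cases h with
  | nil _ hp => exact hp
  | cons hp _ _ => exact hp

theorem AWalk.dst {E V p q c} (h : AWalk E V p q c) : V q := by
  induction h with
  | nil _ hp => exact hp
  | cons hp he hw ih => exact ih

theorem AWalk.mono {E E' V V' : _} {p q c} (h : AWalk E V p q c)
    (hE : ∀ a b w, E a b w → E' a b w) (hV : ∀ a, V a → V' a) :
    AWalk E' V' p q c := by
  induction h with
  | nil _ hp => exact .nil _ (hV _ hp)
  | cons hp he hw ih => exact .cons (hV _ hp) (hE _ _ _ he) ih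

theorem AWalk.append {E V p q r c1 c2} (h1 : AWalk E V p q c1)
    (h2 : AWalk E V q r c2) : AWalk E V p r (c1 + c2) := by
  induction h1 with
  | nil _ hp => simpa using h2
  | cons hp he hw ih => rw [Nat.add_assoc]; exact .cons hp he (ih h2)

theorem sagWalkCost_iff {n m : ℕ} {π π' : ℕ → ℤ × ℤ} {S : Set (ℤ × ℤ)}
    {p p' : ℤ × ℤ} {c : ℕ} :
    sagWalkCost n m π π' S p p' c ↔
      AWalk (agEdge S) (sliceV n m π π') p p' c := by
  constructor
  · rintro ⟨L, f, w, h0, hL, hV, hE, hc⟩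
    subst hc
    induction L generalizing f w p with
    | zero =>
      simp only [Finset.range_zero, Finset.sum_empty]
      rw [← h0, ← hL]
      exact .nil _ ⟨(hV 0 (by omega)).1, (hV 0 (by omega)).2⟩
    | succ L ih =>
      rw [Finset.sum_range_succ', Nat.add_comm, ← h0]
      exact AWalk.cons ⟨(hV 0 (by omega)).1, (hV 0 (by omega)).2⟩
        (hE 0 (by omega))
        (ih (fun i => f (i + 1)) (fun i => w (i + 1)) rfl hL
          (fun i hi => hV (i + 1) (by omega)) (fun i hi => hE (i + 1) (by omega)))
  · intro h
    induction h with
    | nil p hp => exact ⟨0, fun _ => p, fun _ => 0, rfl, rfl,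
        fun i _ => hp, fun i hi => absurd hi (by omega), by simp⟩
    | @cons p q r w0 c hp he hw ih =>
      obtain ⟨L, f, w, h0, hL, hV, hE, hc⟩ := ih
      refine ⟨L + 1, fun i => if i = 0 then p else f (i - 1),
        fun i => if i = 0 then w0 else w (i - 1), by simp, by simp [hL], ?_, ?_, ?_⟩
      · intro i hi
        by_cases h : i = 0
        · simpa [h, sliceV] using hp
        · simpa [h] using hV (i - 1) (by omega)
      · intro i hi
        by_cases h : i = 0
        · simpa [h, h0] using he
        · have h1 : i + 1 ≠ 0 := by omega
          have h2 : i - 1 + 1 = i := by omega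
          have := hE (i - 1) (by omega)
          rw [h2] at this
          simpa [h, h1, h2] using this
      · rw [Finset.sum_range_succ']
        simp only [if_pos rfl]
        have : ∀ i ∈ Finset.range L, (if i + 1 = 0 then w0 else w (i + 1 - 1)) = w i := by
          intro i _; simp
        rw [Finset.sum_congr rfl this, ← hc]
        simp [Nat.add_comm]

/-- Diagonal index of a point. -/
def diagIdx (m : ℕ) (p : ℤ × ℤ) : ℕ := (p.1 - p.2 + m).toNat

theorem diagIdx_val {n m : ℕ} {p : ℤ × ℤ} (h : inGrid n m p) :
    (diagIdx m p : ℤ) = p.1 - p.2 + m ∧ diagIdx m p ≤ n + m := by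
  obtain ⟨h1, h2, h3, h4⟩ := h
  unfold diagIdx
  omega

theorem prec_eq_of_le {p q : ℤ × ℤ} (hd : p.1 - p.2 = q.1 - q.2)
    (h : p.1 ≤ q.1) : prec_eq p q := by
  rcases eq_or_lt_of_le h with h' | h'
  · exact Or.inl (Prod.ext h' (by omega))
  · exact Or.inr ⟨h', by omega⟩

theorem le_of_prec_eq {p q : ℤ × ℤ} (h : prec_eq p q) :
    p.1 ≤ q.1 ∧ p.2 ≤ q.2 := by
  rcases h with h | h
  · rw [h]; exact ⟨le_refl _, le_refl _⟩
  · exact ⟨le_of_lt h.1, le_of_lt h.2⟩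

theorem prec_eq_trans {p q r : ℤ × ℤ} (h1 : prec_eq p q) (h2 : prec_eq q r) :
    prec_eq p r := by
  rcases h1 with h1 | h1
  · rw [h1]; exact h2
  · rcases h2 with h2 | h2
    · rw [← h2]; exact Or.inr h1
    · exact Or.inr ⟨lt_trans h1.1 h2.1, lt_trans h1.2 h2.2⟩

/-- Consecutive cut-path points differ by a unit step (right or down). -/
theorem cutPath_step {n m : ℕ} {κ : ℕ → ℤ × ℤ} (hκ : IsCutPath n m κ)
    (d : ℕ) (hd : d + 1 ≤ n + m) :
    ((κ (d + 1)).1 = (κ d).1 + 1 ∧ (κ (d + 1)).2 = (κ d).2) ∨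
    ((κ (d + 1)).1 = (κ d).1 ∧ (κ (d + 1)).2 = (κ d).2 - 1) := by
  have e1 := hκ.2.1 d (by omega)
  have e2 := hκ.2.1 (d + 1) hd
  have a1 := hκ.2.2 d (by omega) (d + 1) hd
  have a2 := hκ.2.2 (d + 1) hd d (by omega)
  omega

/-- A cut-path point is on its own diagonal index. -/
theorem diagIdx_cutPath {n m : ℕ} {κ : ℕ → ℤ × ℤ} (hκ : IsCutPath n m κ)
    (d : ℕ) (hd : d ≤ n + m) : diagIdx m (κ d) = d := by
  have e1 := hκ.2.1 d hd
  unfold diagIdx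
  omega

/-- Left projection onto the slice below κ. -/
def projL (m : ℕ) (κ : ℕ → ℤ × ℤ) (p : ℤ × ℤ) : ℤ × ℤ :=
  if p.1 ≤ (κ (diagIdx m p)).1 then p else κ (diagIdx m p)

/-- Right projection onto the slice above κ. -/
def projR (m : ℕ) (κ : ℕ → ℤ × ℤ) (p : ℤ × ℤ) : ℤ × ℤ :=
  if (κ (diagIdx m p)).1 ≤ p.1 then p else κ (diagIdx m p)

theorem projL_vertex {n m : ℕ} {α β κ : ℕ → ℤ × ℤ} {p : ℤ × ℤ}
    (hκ : IsCutPath n m κ) (hord : ∀ d ≤ n + m, prec_eq (α d) (κ d))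
    (hp : sliceV n m α β p) : sliceV n m α κ (projL m κ p) := by
  obtain ⟨hdv, hdl⟩ := diagIdx_val hp.1
  simp only [diagIdx] at hdv hdl
  have hA := hκ.2.1 _ hdl
  delta projL diagIdx
  split_ifs with h
  · exact ⟨hp.1, hp.2.1, prec_eq_of_le (by omega) h⟩
  · have hrw : ((κ ((p.1 - p.2 + m).toNat)).1 - (κ ((p.1 - p.2 + m).toNat)).2
        + m).toNat = (p.1 - p.2 + m).toNat := by omega
    refine ⟨hκ.1 _ hdl, ?_⟩
    unfold inSlice
    rw [hrw]
    exact ⟨hord _ hdl, Or.inl rfl⟩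

theorem projR_vertex {n m : ℕ} {α β κ : ℕ → ℤ × ℤ} {p : ℤ × ℤ}
    (hκ : IsCutPath n m κ) (hord : ∀ d ≤ n + m, prec_eq (κ d) (β d))
    (hp : sliceV n m α β p) : sliceV n m κ β (projR m κ p) := by
  obtain ⟨hdv, hdl⟩ := diagIdx_val hp.1
  simp only [diagIdx] at hdv hdl
  have hA := hκ.2.1 _ hdl
  delta projR diagIdx
  split_ifs with h
  · exact ⟨hp.1, prec_eq_of_le (by omega) h, hp.2.2⟩
  · have hrw : ((κ ((p.1 - p.2 + m).toNat)).1 - (κ ((p.1 - p.2 + m).toNat)).2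
        + m).toNat = (p.1 - p.2 + m).toNat := by omega
    refine ⟨hκ.1 _ hdl, ?_⟩
    unfold inSlice
    rw [hrw]
    exact ⟨Or.inl rfl, hord _ hdl⟩

theorem no_jump {n m : ℕ} {α β κ : ℕ → ℤ × ℤ} {S : Set (ℤ × ℤ)}
    {p q : ℤ × ℤ} {w : ℕ} (hκ : IsCutPath n m κ)
    (hp : sliceV n m α β p) (hq : sliceV n m α β q) (he : agEdge S p q w)
    (hbelow : p.1 ≤ (κ (diagIdx m p)).1) (hne : p ≠ κ (diagIdx m p)) :
    q.1 ≤ (κ (diagIdx m q)).1 := by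
  obtain ⟨hdp, hdpl⟩ := diagIdx_val hp.1
  obtain ⟨hdq, hdql⟩ := diagIdx_val hq.1
  simp only [diagIdx] at hdp hdpl hdq hdql hbelow hne ⊢
  have hA := hκ.2.1 _ hdpl
  have hB := hκ.2.1 _ hdql
  have hlt : p.1 < (κ ((p.1 - p.2 + m).toNat)).1 := by
    rcases eq_or_lt_of_le hbelow with h | h
    · exact absurd (Prod.ext h (by omega)) hne
    · exact h
  rcases he with ⟨hmv, hw⟩ | ⟨hmv, hw⟩
  · rcases hmv with ⟨h1, h2⟩ | ⟨h1, h2⟩ | ⟨h1, h2⟩ | ⟨h1, h2⟩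
    · have ht : (q.1 - q.2 + m).toNat = (p.1 - p.2 + m).toNat + 1 := by omega
      rw [ht] at hB ⊢
      rcases cutPath_step hκ ((p.1 - p.2 + m).toNat) (by omega) with hst | hst <;> omega
    · have ht : (p.1 - p.2 + m).toNat = (q.1 - q.2 + m).toNat + 1 := by omega
      rw [ht] at hA hlt
      rcases cutPath_step hκ ((q.1 - q.2 + m).toNat) (by omega) with hst | hst <;> omega
    · have ht : (p.1 - p.2 + m).toNat = (q.1 - q.2 + m).toNat + 1 := by omega
      rw [ht] at hA hlt
      rcases cutPath_step hκ ((q.1 - q.2 + m).toNat) (by omega) with hst | hst <;> omega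
    · have ht : (q.1 - q.2 + m).toNat = (p.1 - p.2 + m).toNat + 1 := by omega
      rw [ht] at hB ⊢
      rcases cutPath_step hκ ((p.1 - p.2 + m).toNat) (by omega) with hst | hst <;> omega
  · have ht : (q.1 - q.2 + m).toNat = (p.1 - p.2 + m).toNat := by
      rcases hmv with ⟨h1, h2, _⟩ | ⟨h1, h2, _⟩ <;> omega
    rw [ht] at hB ⊢
    rcases hmv with ⟨h1, h2, _⟩ | ⟨h1, h2, _⟩ <;> omega

theorem cross {n m : ℕ} {α β κ : ℕ → ℤ × ℤ} {S : Set (ℤ × ℤ)}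
    {p r : ℤ × ℤ} {c : ℕ} (hκ : IsCutPath n m κ)
    (h : AWalk (agEdge S) (sliceV n m α β) p r c)
    (hr : (κ (diagIdx m r)).1 ≤ r.1) :
    p.1 ≤ (κ (diagIdx m p)).1 →
    ∃ q c1 c2, q = κ (diagIdx m q) ∧ c1 + c2 = c ∧
      AWalk (agEdge S) (sliceV n m α β) p q c1 ∧
      AWalk (agEdge S) (sliceV n m α β) q r c2 := by
  induction h with
  | nil p hp' =>
    intro hp
    refine ⟨p, 0, 0, ?_, rfl, .nil _ hp', .nil _ hp'⟩
    obtain ⟨hdv, hdl⟩ := diagIdx_val hp'.1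
    simp only [diagIdx] at hdv hdl hp hr ⊢
    have hA := hκ.2.1 _ hdl
    exact Prod.ext (by omega) (by omega)
  | @cons p q' r w c hp' he hw ih =>
    intro hp
    by_cases hcr : p = κ (diagIdx m p)
    · exact ⟨p, 0, w + c, hcr, by omega, .nil _ hp', .cons hp' he hw⟩
    · obtain ⟨qq, c1, c2, h1, h2, h3, h4⟩ :=
        ih hr (no_jump hκ hp' hw.src he hp hcr)
      exact ⟨qq, w + c1, c2, h1, by omega, .cons hp' he h3, h4⟩

theorem projL_edge {n m : ℕ} {α β κ : ℕ → ℤ × ℤ} {S : Set (ℤ × ℤ)}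
    {p q : ℤ × ℤ} {w : ℕ} (hκ : IsCutPath n m κ)
    (hp : sliceV n m α β p) (hq : sliceV n m α β q) (he : agEdge S p q w) :
    projL m κ p = projL m κ q ∨
      agEdge (S ∩ {x | inHalfSlice m α κ x}) (projL m κ p) (projL m κ q) w := by
  obtain ⟨hdp, hdpl⟩ := diagIdx_val hp.1
  obtain ⟨hdq, hdql⟩ := diagIdx_val hq.1
  simp only [diagIdx] at hdp hdpl hdq hdql
  have hA := hκ.2.1 _ hdpl
  have hB := hκ.2.1 _ hdql
  delta projL diagIdx
  rcases he with ⟨hmv, hw⟩ | ⟨hmv, hw⟩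
  · rcases hmv with ⟨h1, h2⟩ | ⟨h1, h2⟩ | ⟨h1, h2⟩ | ⟨h1, h2⟩
    · have ht : (q.1 - q.2 + m).toNat = (p.1 - p.2 + m).toNat + 1 := by omega
      rw [ht] at hB ⊢
      rcases cutPath_step hκ ((p.1 - p.2 + m).toNat) (by omega) with hst | hst <;>
        split_ifs with c1 c2 c2 <;>
        first
        | exact Or.inl rfl
        | exact Or.inl (Prod.ext (by omega) (by omega))
        | (exfalso; omega)
        | exact Or.inr (Or.inl ⟨Or.inl ⟨by omega, by omega⟩, hw⟩)
        | exact Or.inr (Or.inl ⟨Or.inr (Or.inl ⟨by omega, by omega⟩), hw⟩)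
        | exact Or.inr (Or.inl ⟨Or.inr (Or.inr (Or.inl ⟨by omega, by omega⟩)), hw⟩)
        | exact Or.inr (Or.inl ⟨Or.inr (Or.inr (Or.inr ⟨by omega, by omega⟩)), hw⟩)
    · have ht : (p.1 - p.2 + m).toNat = (q.1 - q.2 + m).toNat + 1 := by omega
      rw [ht] at hA ⊢
      rcases cutPath_step hκ ((q.1 - q.2 + m).toNat) (by omega) with hst | hst <;>
        split_ifs with c1 c2 c2 <;>
        first
        | exact Or.inl rfl
        | exact Or.inl (Prod.ext (by omega) (by omega))
        | (exfalso; omega)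
        | exact Or.inr (Or.inl ⟨Or.inl ⟨by omega, by omega⟩, hw⟩)
        | exact Or.inr (Or.inl ⟨Or.inr (Or.inl ⟨by omega, by omega⟩), hw⟩)
        | exact Or.inr (Or.inl ⟨Or.inr (Or.inr (Or.inl ⟨by omega, by omega⟩)), hw⟩)
        | exact Or.inr (Or.inl ⟨Or.inr (Or.inr (Or.inr ⟨by omega, by omega⟩)), hw⟩)
    · have ht : (p.1 - p.2 + m).toNat = (q.1 - q.2 + m).toNat + 1 := by omega
      rw [ht] at hA ⊢
      rcases cutPath_step hκ ((q.1 - q.2 + m).toNat) (by omega) with hst | hst <;>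
        split_ifs with c1 c2 c2 <;>
        first
        | exact Or.inl rfl
        | exact Or.inl (Prod.ext (by omega) (by omega))
        | (exfalso; omega)
        | exact Or.inr (Or.inl ⟨Or.inl ⟨by omega, by omega⟩, hw⟩)
        | exact Or.inr (Or.inl ⟨Or.inr (Or.inl ⟨by omega, by omega⟩), hw⟩)
        | exact Or.inr (Or.inl ⟨Or.inr (Or.inr (Or.inl ⟨by omega, by omega⟩)), hw⟩)
        | exact Or.inr (Or.inl ⟨Or.inr (Or.inr (Or.inr ⟨by omega, by omega⟩)), hw⟩)
    · have ht : (q.1 - q.2 + m).toNat = (p.1 - p.2 + m).toNat + 1 := by omega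
      rw [ht] at hB ⊢
      rcases cutPath_step hκ ((p.1 - p.2 + m).toNat) (by omega) with hst | hst <;>
        split_ifs with c1 c2 c2 <;>
        first
        | exact Or.inl rfl
        | exact Or.inl (Prod.ext (by omega) (by omega))
        | (exfalso; omega)
        | exact Or.inr (Or.inl ⟨Or.inl ⟨by omega, by omega⟩, hw⟩)
        | exact Or.inr (Or.inl ⟨Or.inr (Or.inl ⟨by omega, by omega⟩), hw⟩)
        | exact Or.inr (Or.inl ⟨Or.inr (Or.inr (Or.inl ⟨by omega, by omega⟩)), hw⟩)
        | exact Or.inr (Or.inl ⟨Or.inr (Or.inr (Or.inr ⟨by omega, by omega⟩)), hw⟩)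
  · rcases hmv with ⟨h1, h2, hSp⟩ | ⟨h1, h2, hSp⟩
    · have ht : (q.1 - q.2 + m).toNat = (p.1 - p.2 + m).toNat := by omega
      rw [ht] at hB ⊢
      split_ifs with c1 c2 c2
      · refine Or.inr (Or.inr ⟨Or.inl ⟨h1, h2, hSp, ?_⟩, hw⟩)
        show inHalfSlice m α κ p
        unfold inHalfSlice
        exact ⟨hp.2.1, by omega, by omega⟩
      · first
        | exact Or.inl rfl
        | exact Or.inl (Prod.ext (by omega) (by omega))
        | (exfalso; omega)
      · first
        | exact Or.inl rfl
        | exact Or.inl (Prod.ext (by omega) (by omega))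
        | (exfalso; omega)
      · first
        | exact Or.inl rfl
        | exact Or.inl (Prod.ext (by omega) (by omega))
        | (exfalso; omega)
    · have ht : (q.1 - q.2 + m).toNat = (p.1 - p.2 + m).toNat := by omega
      have hq1 := hq.2.1
      rw [ht] at hq1
      rw [ht] at hB ⊢
      split_ifs with c1 c2 c2
      · refine Or.inr (Or.inr ⟨Or.inr ⟨h1, h2, hSp, ?_⟩, hw⟩)
        show inHalfSlice m α κ q
        unfold inHalfSlice
        rw [ht]
        exact ⟨hq1, by omega, by omega⟩
      · first
        | exact Or.inl rfl
        | exact Or.inl (Prod.ext (by omega) (by omega))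
        | (exfalso; omega)
      · first
        | exact Or.inl rfl
        | exact Or.inl (Prod.ext (by omega) (by omega))
        | (exfalso; omega)
      · first
        | exact Or.inl rfl
        | exact Or.inl (Prod.ext (by omega) (by omega))
        | (exfalso; omega)

theorem projR_edge {n m : ℕ} {α β κ : ℕ → ℤ × ℤ} {S : Set (ℤ × ℤ)}
    {p q : ℤ × ℤ} {w : ℕ} (hκ : IsCutPath n m κ)
    (hp : sliceV n m α β p) (hq : sliceV n m α β q) (he : agEdge S p q w) :
    projR m κ p = projR m κ q ∨
      agEdge (S ∩ {x | inHalfSlice m κ β x}) (projR m κ p) (projR m κ q) w := by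
  obtain ⟨hdp, hdpl⟩ := diagIdx_val hp.1
  obtain ⟨hdq, hdql⟩ := diagIdx_val hq.1
  simp only [diagIdx] at hdp hdpl hdq hdql
  have hA := hκ.2.1 _ hdpl
  have hB := hκ.2.1 _ hdql
  delta projR diagIdx
  rcases he with ⟨hmv, hw⟩ | ⟨hmv, hw⟩
  · rcases hmv with ⟨h1, h2⟩ | ⟨h1, h2⟩ | ⟨h1, h2⟩ | ⟨h1, h2⟩
    · have ht : (q.1 - q.2 + m).toNat = (p.1 - p.2 + m).toNat + 1 := by omega
      rw [ht] at hB ⊢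
      rcases cutPath_step hκ ((p.1 - p.2 + m).toNat) (by omega) with hst | hst <;>
        split_ifs with c1 c2 c2 <;>
        first
        | exact Or.inl rfl
        | exact Or.inl (Prod.ext (by omega) (by omega))
        | (exfalso; omega)
        | exact Or.inr (Or.inl ⟨Or.inl ⟨by omega, by omega⟩, hw⟩)
        | exact Or.inr (Or.inl ⟨Or.inr (Or.inl ⟨by omega, by omega⟩), hw⟩)
        | exact Or.inr (Or.inl ⟨Or.inr (Or.inr (Or.inl ⟨by omega, by omega⟩)), hw⟩)
        | exact Or.inr (Or.inl ⟨Or.inr (Or.inr (Or.inr ⟨by omega, by omega⟩)), hw⟩)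
    · have ht : (p.1 - p.2 + m).toNat = (q.1 - q.2 + m).toNat + 1 := by omega
      rw [ht] at hA ⊢
      rcases cutPath_step hκ ((q.1 - q.2 + m).toNat) (by omega) with hst | hst <;>
        split_ifs with c1 c2 c2 <;>
        first
        | exact Or.inl rfl
        | exact Or.inl (Prod.ext (by omega) (by omega))
        | (exfalso; omega)
        | exact Or.inr (Or.inl ⟨Or.inl ⟨by omega, by omega⟩, hw⟩)
        | exact Or.inr (Or.inl ⟨Or.inr (Or.inl ⟨by omega, by omega⟩), hw⟩)
        | exact Or.inr (Or.inl ⟨Or.inr (Or.inr (Or.inl ⟨by omega, by omega⟩)), hw⟩)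
        | exact Or.inr (Or.inl ⟨Or.inr (Or.inr (Or.inr ⟨by omega, by omega⟩)), hw⟩)
    · have ht : (p.1 - p.2 + m).toNat = (q.1 - q.2 + m).toNat + 1 := by omega
      rw [ht] at hA ⊢
      rcases cutPath_step hκ ((q.1 - q.2 + m).toNat) (by omega) with hst | hst <;>
        split_ifs with c1 c2 c2 <;>
        first
        | exact Or.inl rfl
        | exact Or.inl (Prod.ext (by omega) (by omega))
        | (exfalso; omega)
        | exact Or.inr (Or.inl ⟨Or.inl ⟨by omega, by omega⟩, hw⟩)
        | exact Or.inr (Or.inl ⟨Or.inr (Or.inl ⟨by omega, by omega⟩), hw⟩)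
        | exact Or.inr (Or.inl ⟨Or.inr (Or.inr (Or.inl ⟨by omega, by omega⟩)), hw⟩)
        | exact Or.inr (Or.inl ⟨Or.inr (Or.inr (Or.inr ⟨by omega, by omega⟩)), hw⟩)
    · have ht : (q.1 - q.2 + m).toNat = (p.1 - p.2 + m).toNat + 1 := by omega
      rw [ht] at hB ⊢
      rcases cutPath_step hκ ((p.1 - p.2 + m).toNat) (by omega) with hst | hst <;>
        split_ifs with c1 c2 c2 <;>
        first
        | exact Or.inl rfl
        | exact Or.inl (Prod.ext (by omega) (by omega))
        | (exfalso; omega)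
        | exact Or.inr (Or.inl ⟨Or.inl ⟨by omega, by omega⟩, hw⟩)
        | exact Or.inr (Or.inl ⟨Or.inr (Or.inl ⟨by omega, by omega⟩), hw⟩)
        | exact Or.inr (Or.inl ⟨Or.inr (Or.inr (Or.inl ⟨by omega, by omega⟩)), hw⟩)
        | exact Or.inr (Or.inl ⟨Or.inr (Or.inr (Or.inr ⟨by omega, by omega⟩)), hw⟩)
  · rcases hmv with ⟨h1, h2, hSp⟩ | ⟨h1, h2, hSp⟩
    · have ht : (q.1 - q.2 + m).toNat = (p.1 - p.2 + m).toNat := by omega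
      have hq2 := hq.2.2
      rw [ht] at hq2
      obtain ⟨hb1, hb2⟩ := le_of_prec_eq hq2
      rw [ht] at hB ⊢
      split_ifs with c1 c2 c2
      · refine Or.inr (Or.inr ⟨Or.inl ⟨h1, h2, hSp, ?_⟩, hw⟩)
        show inHalfSlice m κ β p
        unfold inHalfSlice
        exact ⟨prec_eq_of_le (by omega) c1, by omega, by omega⟩
      · first
        | exact Or.inl rfl
        | exact Or.inl (Prod.ext (by omega) (by omega))
        | (exfalso; omega)
      · first
        | exact Or.inl rfl
        | exact Or.inl (Prod.ext (by omega) (by omega))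
        | (exfalso; omega)
      · first
        | exact Or.inl rfl
        | exact Or.inl (Prod.ext (by omega) (by omega))
        | (exfalso; omega)
    · have ht : (q.1 - q.2 + m).toNat = (p.1 - p.2 + m).toNat := by omega
      obtain ⟨hb1, hb2⟩ := le_of_prec_eq hp.2.2
      rw [ht] at hB ⊢
      split_ifs with c1 c2 c2
      · refine Or.inr (Or.inr ⟨Or.inr ⟨h1, h2, hSp, ?_⟩, hw⟩)
        show inHalfSlice m κ β q
        unfold inHalfSlice
        rw [ht]
        exact ⟨prec_eq_of_le (by omega) c2, by omega, by omega⟩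
      · first
        | exact Or.inl rfl
        | exact Or.inl (Prod.ext (by omega) (by omega))
        | (exfalso; omega)
      · first
        | exact Or.inl rfl
        | exact Or.inl (Prod.ext (by omega) (by omega))
        | (exfalso; omega)
      · first
        | exact Or.inl rfl
        | exact Or.inl (Prod.ext (by omega) (by omega))
        | (exfalso; omega)

theorem projL_walk {n m : ℕ} {α β κ : ℕ → ℤ × ℤ} {S : Set (ℤ × ℤ)}
    {p r : ℤ × ℤ} {c : ℕ} (hκ : IsCutPath n m κ)
    (hord : ∀ d ≤ n + m, prec_eq (α d) (κ d))
    (h : AWalk (agEdge S) (sliceV n m α β) p r c) :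
    ∃ c' ≤ c, AWalk (agEdge (S ∩ {x | inHalfSlice m α κ x})) (sliceV n m α κ)
      (projL m κ p) (projL m κ r) c' := by
  induction h with
  | nil p hp => exact ⟨0, le_refl 0, .nil _ (projL_vertex hκ hord hp)⟩
  | cons hp he hw ih =>
    obtain ⟨c', hc', hwalk⟩ := ih
    rcases projL_edge hκ hp hw.src he with heq | hedge
    · exact ⟨c', by omega, by rw [heq]; exact hwalk⟩
    · exact ⟨_ + c', by omega, .cons (projL_vertex hκ hord hp) hedge hwalk⟩

theorem projR_walk {n m : ℕ} {α β κ : ℕ → ℤ × ℤ} {S : Set (ℤ × ℤ)}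
    {p r : ℤ × ℤ} {c : ℕ} (hκ : IsCutPath n m κ)
    (hord : ∀ d ≤ n + m, prec_eq (κ d) (β d))
    (h : AWalk (agEdge S) (sliceV n m α β) p r c) :
    ∃ c' ≤ c, AWalk (agEdge (S ∩ {x | inHalfSlice m κ β x})) (sliceV n m κ β)
      (projR m κ p) (projR m κ r) c' := by
  induction h with
  | nil p hp => exact ⟨0, le_refl 0, .nil _ (projR_vertex hκ hord hp)⟩
  | cons hp he hw ih =>
    obtain ⟨c', hc', hwalk⟩ := ih
    rcases projR_edge hκ hp hw.src he with heq | hedge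
    · exact ⟨c', by omega, by rw [heq]; exact hwalk⟩
    · exact ⟨_ + c', by omega, .cons (projR_vertex hκ hord hp) hedge hwalk⟩

theorem agEdge_mono {S T : Set (ℤ × ℤ)} {p q : ℤ × ℤ} {w : ℕ}
    (hST : S ⊆ T) (h : agEdge S p q w) : agEdge T p q w := by
  rcases h with h | ⟨h, hw⟩
  · exact Or.inl h
  · refine Or.inr ⟨?_, hw⟩
    rcases h with ⟨h1, h2, h3⟩ | ⟨h1, h2, h3⟩
    · exact Or.inl ⟨h1, h2, hST h3⟩
    · exact Or.inr ⟨h1, h2, hST h3⟩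

/-- with `π ⪯ π'' ⪯ π'` and `G_L`, `G_R` the two slice alignment
graphs split along `π''` (with `S` split accordingly),
`D_G[a,b] = min_c (D_{G_L}[a,c] + D_{G_R}[c,b])`, i.e. `D_G = D_{G_L} ⊙ D_{G_R}`. -/
theorem stmt17 (n m : ℕ) (π π'' π' : ℕ → ℤ × ℤ) (S : Set (ℤ × ℤ))
    (hπ : IsCutPath n m π) (hπ'' : IsCutPath n m π'') (hπ' : IsCutPath n m π')
    (hord1 : ∀ d ≤ n + m, prec_eq (π d) (π'' d))
    (hord2 : ∀ d ≤ n + m, prec_eq (π'' d) (π' d))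
    (hS : ∀ p ∈ S, 0 ≤ p.1 ∧ p.1 < (n : ℤ) ∧ 0 ≤ p.2 ∧ p.2 < (m : ℤ))
    (hSin : ∀ p ∈ S, inHalfSlice m π π' p)
    (D DL DR : ℕ → ℕ → ℕ)
    (hD : ∀ a ≤ n + m, ∀ b ≤ n + m,
      IsLeast {c | sagWalkCost n m π π' S (π a) (π' b) c} (D a b))
    (hDL : ∀ a ≤ n + m, ∀ b ≤ n + m,
      IsLeast {c | sagWalkCost n m π π''
        (S ∩ {p | inHalfSlice m π π'' p}) (π a) (π'' b) c} (DL a b))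
    (hDR : ∀ a ≤ n + m, ∀ b ≤ n + m,
      IsLeast {c | sagWalkCost n m π'' π'
        (S ∩ {p | inHalfSlice m π'' π' p}) (π'' a) (π' b) c} (DR a b)) :
    ∀ a ≤ n + m, ∀ b ≤ n + m,
      IsLeast {v : ℕ | ∃ c ≤ n + m, v = DL a c + DR c b} (D a b) := by
  have hVL : ∀ x, sliceV n m π π'' x → sliceV n m π π' x := by
    rintro x ⟨hg, h1, h2⟩
    refine ⟨hg, h1, prec_eq_trans h2 (hord2 _ ?_)⟩
    have := (diagIdx_val hg).2
    simpa [diagIdx] using this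
  have hVR : ∀ x, sliceV n m π'' π' x → sliceV n m π π' x := by
    rintro x ⟨hg, h1, h2⟩
    refine ⟨hg, prec_eq_trans (hord1 _ ?_) h1, h2⟩
    have := (diagIdx_val hg).2
    simpa [diagIdx] using this
  have key_upper : ∀ a ≤ n + m, ∀ b ≤ n + m, ∀ c ≤ n + m,
      D a b ≤ DL a c + DR c b := by
    intro a ha b hb c hc
    have WL := sagWalkCost_iff.mp (hDL a ha c hc).1
    have WR := sagWalkCost_iff.mp (hDR c hc b hb).1
    have WL' := WL.mono (fun x y w h => agEdge_mono Set.inter_subset_left h) hVL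
    have WR' := WR.mono (fun x y w h => agEdge_mono Set.inter_subset_left h) hVR
    exact (hD a ha b hb).2 (sagWalkCost_iff.mpr (WL'.append WR'))
  intro a ha b hb
  constructor
  · have W := sagWalkCost_iff.mp (hD a ha b hb).1
    have hpa : diagIdx m (π a) = a := diagIdx_cutPath hπ a ha
    have hpb : diagIdx m (π' b) = b := diagIdx_cutPath hπ' b hb
    have h1 : (π a).1 ≤ (π'' (diagIdx m (π a))).1 := by
      rw [hpa]; exact (le_of_prec_eq (hord1 a ha)).1
    have h2 : (π'' (diagIdx m (π' b))).1 ≤ (π' b).1 := by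
      rw [hpb]; exact (le_of_prec_eq (hord2 b hb)).1
    obtain ⟨q, c1, c2, hq, hsum, W1, W2⟩ := cross hπ'' W h2 h1
    have hcc : diagIdx m q ≤ n + m := (diagIdx_val (W1.dst).1).2
    obtain ⟨c1', hc1', PW1⟩ := projL_walk hπ'' hord1 W1
    obtain ⟨c2', hc2', PW2⟩ := projR_walk hπ'' hord2 W2
    have e1 : projL m π'' (π a) = π a := by
      unfold projL
      rw [hpa, if_pos ((le_of_prec_eq (hord1 a ha)).1)]
    have e2 : projL m π'' q = q := by
      unfold projL
      rw [if_pos (congrArg Prod.fst hq).le]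
    have e3 : projR m π'' q = q := by
      unfold projR
      rw [if_pos (congrArg Prod.fst hq).ge]
    have e4 : projR m π'' (π' b) = π' b := by
      unfold projR
      rw [hpb, if_pos ((le_of_prec_eq (hord2 b hb)).1)]
    rw [e1, e2] at PW1
    rw [e3, e4] at PW2
    rw [hq] at PW1
    rw [hq] at PW2
    have hL : DL a (diagIdx m q) ≤ c1' :=
      (hDL a ha (diagIdx m q) hcc).2 (sagWalkCost_iff.mpr PW1)
    have hR : DR (diagIdx m q) b ≤ c2' :=
      (hDR (diagIdx m q) hcc b hb).2 (sagWalkCost_iff.mpr PW2)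
    have hup := key_upper a ha b hb (diagIdx m q) hcc
    exact ⟨diagIdx m q, hcc, by omega⟩
  · rintro v ⟨c, hc, rfl⟩
    exact key_upper a ha b hb c hc
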